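/- Let G be a topological group, K a strongly neutral subgroup, and H a closed subgroup of G. Then every point of the double coset space K\G/H is closed, i.e., K\G/H is a T1 space. -/

import Mathlib

open scoped Pointwise

/-- The quotient topology on the double coset space. -/
instance dosetQuotientTopology {G : Type*} [Group G] [TopologicalSpace G] (K H : Set G) :
    TopologicalSpace (DoubleCoset.Quotient K H) :=
  inferInstanceAs (TopologicalSpace (Quotient (DoubleCoset.setoid K H)))

/-- if `K` is strongly neutral and `H` is closed, the double coset
space `K\G/H` is T1. -/
theorem stmt_3 {G : Type*} [Group G] [TopologicalSpace G] [IsTopologicalGroup G]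
    (K H : Subgroup G)
    (hK : ∀ O : Set G, IsOpen O → (K : Set G) ⊆ O →
      ∃ V : Set G, IsOpen V ∧ (1 : G) ∈ V ∧ (K : Set G) * V ⊆ O)
    (hH : IsClosed (H : Set G)) :
    T1Space (DoubleCoset.Quotient (K : Set G) (H : Set G)) := by
  constructor
  intro q
  induction q using Quotient.ind with
  | _ x =>
  -- reduce to closedness of the doset in `G`
  have hpre : (Quotient.mk (DoubleCoset.setoid (K : Set G) (H : Set G)) ⁻¹' {⟦x⟧}) =
      DoubleCoset.doubleCoset x (K : Set G) (H : Set G) := by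
    ext g
    simp only [Set.mem_preimage, Set.mem_singleton_iff, Quotient.eq]
    constructor
    · intro hgx
      have hx : x ∈ DoubleCoset.doubleCoset g (K : Set G) (H : Set G) :=
        DoubleCoset.mem_doubleCoset.mpr (DoubleCoset.rel_iff.mp hgx)
      rw [DoubleCoset.doubleCoset_eq_of_mem hx]
      exact DoubleCoset.mem_doubleCoset_self K H g
    · intro hg
      refine DoubleCoset.rel_iff.mpr (DoubleCoset.mem_doubleCoset.mp ?_)
      rw [DoubleCoset.doubleCoset_eq_of_mem hg]
      exact DoubleCoset.mem_doubleCoset_self K H x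
  have hclosed : IsClosed (DoubleCoset.doubleCoset x (K : Set G) (H : Set G)) := by
    rw [← isOpen_compl_iff, isOpen_iff_forall_mem_open]
    intro g hg
    set O : Set G := (fun u => x⁻¹ * u * g) ⁻¹' ((H : Set G)ᶜ) with hO
    have hOopen : IsOpen O := (hH.isOpen_compl).preimage (by continuity)
    have hKO : (K : Set G) ⊆ O := by
      intro k hk
      simp only [hO, Set.mem_preimage, Set.mem_compl_iff, SetLike.mem_coe]
      intro hmem
      exact hg (DoubleCoset.mem_doubleCoset.mpr ⟨k⁻¹, K.inv_mem hk, x⁻¹ * k * g, hmem, by group⟩)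
    obtain ⟨V, hVopen, hV1, hKV⟩ := hK O hOopen hKO
    refine ⟨V * {g}, ?_, ?_, ?_⟩
    · intro u hu
      have hv : u * g⁻¹ ∈ V := by simpa [Set.mul_singleton] using hu
      intro hmem
      obtain ⟨k, hk, h, hh, heq⟩ := DoubleCoset.mem_doubleCoset.mp hmem
      have hKVmem : k⁻¹ * (u * g⁻¹) ∈ (K : Set G) * V :=
        Set.mul_mem_mul (K.inv_mem hk) hv
      have hnot := hKV hKVmem
      simp only [hO, Set.mem_preimage, Set.mem_compl_iff, SetLike.mem_coe] at hnot
      apply hnot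
      have key : x⁻¹ * (k⁻¹ * (u * g⁻¹)) * g = h := by rw [heq]; group
      rw [key]; exact hh
    · simpa [Set.mul_singleton] using (isOpenMap_mul_right g) V hVopen
    · simpa using Set.mul_mem_mul hV1 (Set.mem_singleton g)
  rw [← hpre] at hclosed
  exact isQuotientMap_quotient_mk'.isClosed_preimage.mp hclosed
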